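/- Let P ⊆ ℝ^d be a d-dimensional rational polytope and a ∈ int(P) a rational vector. Then for every positive real t, the Ehrhart counting function satisfies L_P(t) = lim_{τ→0⁺} A_{P, τ(P-a)}(t), where A_{P,R}(t) := Σ_{x∈ℤ^d} ω_{tP+R}(x) is the shifted solid angle sum and + denotes Minkowski sum. -/

import Mathlib

open scoped BigOperators
open MeasureTheory
attribute [local instance] Classical.propDecidable

/-- The Euclidean ball of radius `ε` around `c` in `ℝ^d`. -/
def eball {d : ℕ} (c : Fin d → ℝ) (ε : ℝ) : Set (Fin d → ℝ) :=
  {y | ∑ i, (y i - c i) ^ 2 < ε ^ 2}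

/-- `saTendsto Q c ω` says that the solid angle of `Q` at `c` exists and equals `ω`:
the proportion of a small Euclidean ball around `c` occupied by `Q` tends to `ω`. -/
def saTendsto {d : ℕ} (Q : Set (Fin d → ℝ)) (c : Fin d → ℝ) (ω : ℝ) : Prop :=
  Filter.Tendsto
    (fun ε : ℝ => (volume (eball c ε ∩ Q)).toReal / (volume (eball c ε)).toReal)
    (nhdsWithin 0 (Set.Ioi 0)) (nhds ω)

open Pointwise

lemma eball_subset_ball {d : ℕ} (c : Fin d → ℝ) {ε : ℝ} (hε : 0 < ε) :
    eball c ε ⊆ Metric.ball c ε := by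
  intro y hy
  rw [Metric.mem_ball, dist_pi_lt_iff hε]
  intro i
  have h1 : (y i - c i) ^ 2 < ε ^ 2 := by
    refine lt_of_le_of_lt ?_ hy
    exact Finset.single_le_sum (f := fun i => (y i - c i)^2) (fun j _ => sq_nonneg _)
      (Finset.mem_univ i)
  rw [Real.dist_eq]
  nlinarith [abs_nonneg (y i - c i), sq_abs (y i - c i)]

lemma ball_subset_eball {d : ℕ} (c : Fin d → ℝ) {ε : ℝ} (hε : 0 < ε) :
    Metric.ball c (ε / (Real.sqrt d + 1)) ⊆ eball c ε := by
  have hs : (0:ℝ) < Real.sqrt d + 1 := by positivity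
  intro y hy
  rw [Metric.mem_ball, dist_pi_lt_iff (by positivity)] at hy
  have hb : ∀ i, (y i - c i)^2 ≤ (ε / (Real.sqrt d + 1))^2 := by
    intro i
    have := hy i
    rw [Real.dist_eq] at this
    calc (y i - c i)^2 = |y i - c i|^2 := (sq_abs _).symm
    _ ≤ (ε / (Real.sqrt d + 1))^2 := by
        apply pow_le_pow_left₀ (abs_nonneg _) this.le
  have hsum : ∑ i, (y i - c i)^2 ≤ d * (ε / (Real.sqrt d + 1))^2 := by
    calc ∑ i, (y i - c i)^2 ≤ ∑ _i : Fin d, (ε / (Real.sqrt d + 1))^2 :=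
      Finset.sum_le_sum (fun i _ => hb i)
    _ = d * (ε / (Real.sqrt d + 1))^2 := by simp [mul_comm]
  refine lt_of_le_of_lt hsum ?_
  rw [div_pow]
  have hd : (d:ℝ) < (Real.sqrt d + 1)^2 := by
    have : ((d:ℝ)) = Real.sqrt d ^ 2 := (Real.sq_sqrt (by positivity)).symm
    nlinarith [Real.sqrt_nonneg (d:ℝ)]
  calc (d:ℝ) * (ε^2 / (Real.sqrt d + 1)^2) < (Real.sqrt d + 1)^2 * (ε^2 / (Real.sqrt d + 1)^2) := by
        apply mul_lt_mul_of_pos_right hd (by positivity)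
  _ = ε^2 := by field_simp

lemma eball_mono {d : ℕ} (c : Fin d → ℝ) {η ε : ℝ} (h0 : 0 ≤ η) (h : η ≤ ε) :
    eball c η ⊆ eball c ε := fun y hy =>
  lt_of_lt_of_le hy (pow_le_pow_left₀ h0 h 2)

lemma volume_eball_pos {d : ℕ} (c : Fin d → ℝ) {ε : ℝ} (hε : 0 < ε) :
    0 < volume (eball c ε) := by
  refine lt_of_lt_of_le ?_ (measure_mono (ball_subset_eball c hε))
  exact Metric.measure_ball_pos _ _ (by positivity)

lemma volume_eball_lt_top {d : ℕ} (c : Fin d → ℝ) {ε : ℝ} (hε : 0 < ε) :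
    volume (eball c ε) < ⊤ :=
  lt_of_le_of_lt (measure_mono (eball_subset_ball c hε)) measure_ball_lt_top

lemma saTendsto_one {d : ℕ} {Q : Set (Fin d → ℝ)} {c : Fin d → ℝ}
    (h : ∃ ε > 0, eball c ε ⊆ Q) : saTendsto Q c 1 := by
  obtain ⟨ε, hε, hsub⟩ := h
  have : ∀ η ∈ Set.Ioo (0:ℝ) ε,
      (volume (eball c η ∩ Q)).toReal / (volume (eball c η)).toReal = 1 := by
    intro η hη
    have hsub' : eball c η ⊆ Q := (eball_mono c hη.1.le hη.2.le).trans hsub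
    rw [Set.inter_eq_left.mpr hsub', div_self]
    exact ENNReal.toReal_ne_zero.mpr ⟨(volume_eball_pos c hη.1).ne',
      (volume_eball_lt_top c hη.1).ne⟩
  refine Filter.Tendsto.congr' ?_ tendsto_const_nhds
  filter_upwards [Ioo_mem_nhdsGT_of_mem (Set.mem_Ico.mpr ⟨le_refl 0, hε⟩)] with η hη
  exact (this η hη).symm

lemma saTendsto_zero {d : ℕ} {Q : Set (Fin d → ℝ)} {c : Fin d → ℝ}
    (h : ∃ ε > 0, eball c ε ∩ Q = ∅) : saTendsto Q c 0 := by
  obtain ⟨ε, hε, hdis⟩ := h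
  refine Filter.Tendsto.congr' ?_ tendsto_const_nhds
  filter_upwards [Ioo_mem_nhdsGT_of_mem (Set.mem_Ico.mpr ⟨le_refl 0, hε⟩)] with η hη
  have : eball c η ∩ Q = ∅ := by
    apply Set.eq_empty_of_subset_empty
    rw [← hdis]
    exact Set.inter_subset_inter_left _ (eball_mono c hη.1.le hη.2.le)
  rw [this]
  simp

lemma saTendsto_unique {d : ℕ} {Q : Set (Fin d → ℝ)} {c : Fin d → ℝ} {w w' : ℝ}
    (h : saTendsto Q c w) (h' : saTendsto Q c w') : w = w' :=
  tendsto_nhds_unique h h'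



/-- The Ehrhart counting function of a rational polytope `P` is the limit, as `τ → 0⁺`, of the
shifted solid angle sums `A_{P,τ(P-a)}(t) = Σ_{x∈ℤ^d} ω_{tP+τ(P-a)}(x)`, for any rational
interior point `a` of `P`. -/
theorem ehrhart_eq_limit_shifted_solid_angle_sum (d : ℕ) (V : Finset (Fin d → ℚ))
    (P : Set (Fin d → ℝ))
    (hP : P = convexHull ℝ ((fun v : Fin d → ℚ => fun i => ((v i : ℝ))) '' (V : Set (Fin d → ℚ))))
    (hfull : (interior P).Nonempty)
    (a : Fin d → ℚ) (ha : (fun i => (a i : ℝ)) ∈ interior P)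
    (t : ℝ) (ht : 0 < t)
    (ω : ℝ → (Fin d → ℤ) → ℝ)
    (hω : ∀ τ ∈ Set.Ioi (0 : ℝ), ∀ n : Fin d → ℤ,
      saTendsto (t • P + τ • ((fun p => p - fun i => (a i : ℝ)) '' P)) (fun i => (n i : ℝ))
        (ω τ n)) :
    Filter.Tendsto (fun τ : ℝ => ∑' n : Fin d → ℤ, ω τ n) (nhdsWithin 0 (Set.Ioi 0))
      (nhds ((Set.ncard {n : Fin d → ℤ | (fun i => (n i : ℝ)) ∈ t • P} : ℝ))) := by
  classical
  set A : Fin d → ℝ := fun i => (a i : ℝ) with hAdef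
  set ι : (Fin d → ℤ) → (Fin d → ℝ) := fun n => fun i => (n i : ℝ) with hιdef
  -- Compactness of P
  have hPfin : ((fun v : Fin d → ℚ => fun i => ((v i : ℝ))) '' (V : Set (Fin d → ℚ))).Finite :=
    (V.finite_toSet.image _)
  have hPcpt : IsCompact P := hP ▸ hPfin.isCompact_convexHull ℝ
  have hPne : P.Nonempty := hfull.mono interior_subset
  have htPcpt : IsCompact (t • P) := IsCompact.smul t hPcpt
  have htPclosed : IsClosed (t • P) := htPcpt.isClosed
  have htPne : (t • P).Nonempty := hPne.smul_set
  -- Norm bound on P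
  obtain ⟨M, hM⟩ : ∃ M, ∀ x ∈ P, ‖x‖ ≤ M :=
    (isBounded_iff_forall_norm_le.mp hPcpt.isBounded)
  have hM0 : 0 ≤ M := le_trans (norm_nonneg _) (hM _ hPne.some_mem)
  set M' : ℝ := M + ‖A‖ with hM'def
  have hM'0 : 0 ≤ M' := add_nonneg hM0 (norm_nonneg _)
  -- elements of Q τ are close to t • P
  have hQmem : ∀ τ : ℝ, 0 < τ → ∀ y ∈ t • P + τ • ((fun p => p - A) '' P),
      ∃ u ∈ t • P, dist y u ≤ τ * M' := by
    rintro τ hτ y ⟨u, hu, v, hv, rfl⟩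
    obtain ⟨w, hw, rfl⟩ := hv
    obtain ⟨p, hp, rfl⟩ := hw
    refine ⟨u, hu, ?_⟩
    rw [dist_eq_norm, add_sub_cancel_left, norm_smul, Real.norm_eq_abs, abs_of_pos hτ]
    have : ‖p - A‖ ≤ M' := le_trans (norm_sub_le _ _) (by rw [hM'def]; linarith [hM p hp])
    exact mul_le_mul_of_nonneg_left this hτ.le
  -- interior ball at A
  obtain ⟨δ, hδ, hball⟩ : ∃ δ > 0, Metric.ball A δ ⊆ P := by
    rcases Metric.mem_nhds_iff.mp (mem_interior_iff_mem_nhds.mp ha) with ⟨δ, hδ, hsub⟩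
    exact ⟨δ, hδ, hsub⟩
  -- ω τ n = 1 for lattice points in t • P
  have hone : ∀ τ : ℝ, 0 < τ → ∀ n : Fin d → ℤ, ι n ∈ t • P → ω τ n = 1 := by
    intro τ hτ n hn
    refine saTendsto_unique (hω τ hτ n) (saTendsto_one ⟨τ * δ, by positivity, ?_⟩)
    intro y hy
    have hy' : dist y (ι n) < τ * δ := eball_subset_ball _ (by positivity) hy
    refine ⟨ι n, hn, τ • ((A + τ⁻¹ • (y - ι n)) - A), ?_, ?_⟩
    · refine Set.smul_mem_smul_set ⟨A + τ⁻¹ • (y - ι n), hball ?_, rfl⟩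
      rw [Metric.mem_ball, dist_eq_norm, add_sub_cancel_left, norm_smul, Real.norm_eq_abs,
        abs_of_pos (inv_pos.mpr hτ)]
      rw [dist_eq_norm] at hy'
      calc τ⁻¹ * ‖y - ι n‖ < τ⁻¹ * (τ * δ) := by
            exact mul_lt_mul_of_pos_left hy' (inv_pos.mpr hτ)
      _ = δ := by field_simp
    · rw [add_sub_cancel_left, smul_smul, mul_inv_cancel₀ hτ.ne', one_smul]
      module
  -- ω τ n = 0 for far lattice points
  have hzero : ∀ n : Fin d → ℤ, ∀ τ : ℝ, 0 < τ → ∀ ε : ℝ, 0 < ε →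
      τ * M' + ε < Metric.infDist (ι n) (t • P) → ω τ n = 0 := by
    intro n τ hτ ε hε hlt
    refine saTendsto_unique (hω τ hτ n) (saTendsto_zero ⟨ε, hε, ?_⟩)
    rw [Set.eq_empty_iff_forall_notMem]
    rintro y ⟨hy1, hy2⟩
    obtain ⟨u, hu, hdu⟩ := hQmem τ hτ y hy2
    have hdy : dist (ι n) y < ε := by
      rw [dist_comm]; exact eball_subset_ball _ hε hy1
    have : Metric.infDist (ι n) (t • P) ≤ dist (ι n) u :=
      Metric.infDist_le_dist_of_mem hu
    have h2 : dist (ι n) u ≤ dist (ι n) y + dist y u := dist_triangle _ _ _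
    linarith
  -- the big finite set
  set B : Set (Fin d → ℤ) := {n | Metric.infDist (ι n) (t • P) ≤ M' + 1} with hBdef
  have hBfin : B.Finite := by
    obtain ⟨K, hK⟩ : ∃ K, ∀ x ∈ t • P, ‖x‖ ≤ K :=
      (isBounded_iff_forall_norm_le.mp htPcpt.isBounded)
    set C : ℝ := K + (M' + 2) with hCdef
    have hsub : B ⊆ Set.Icc (fun _ => -⌈C⌉) (fun _ => ⌈C⌉) := by
      intro n hn
      obtain ⟨p, hp, hdp⟩ := (Metric.infDist_lt_iff htPne).mp
        (lt_of_le_of_lt hn (by linarith : M' + 1 < M' + 2))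
      have hnorm : ‖ι n‖ ≤ C := by
        calc ‖ι n‖ ≤ ‖p‖ + dist (ι n) p := by
              rw [dist_eq_norm]
              have := norm_add_le p (ι n - p)
              simpa using this
        _ ≤ K + (M' + 2) := add_le_add (hK p hp) hdp.le
      constructor <;> intro i
      · have h1 : |(n i : ℝ)| ≤ C := le_trans (norm_le_pi_norm (ι n) i) hnorm
        have h2 : -(C : ℝ) ≤ (n i : ℝ) := neg_le_of_abs_le h1
        have : ((-⌈C⌉ : ℤ) : ℝ) ≤ ((n i : ℤ) : ℝ) := by
          push_cast
          exact le_trans (neg_le_neg (Int.le_ceil C)) h2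
        exact_mod_cast this
      · have h1 : |(n i : ℝ)| ≤ C := le_trans (norm_le_pi_norm (ι n) i) hnorm
        have : ((n i : ℤ) : ℝ) ≤ ((⌈C⌉ : ℤ) : ℝ) :=
          le_trans (le_of_abs_le h1) (Int.le_ceil C)
        exact_mod_cast this
    exact (Set.finite_Icc _ _).subset hsub
  set S : Set (Fin d → ℤ) := {n : Fin d → ℤ | ι n ∈ t • P} with hSdef
  have hSB : S ⊆ B := by
    intro n hn
    have : Metric.infDist (ι n) (t • P) = 0 := Metric.infDist_zero_of_mem hn
    rw [hBdef, Set.mem_setOf_eq, this]; linarith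
  have hSfin : S.Finite := hBfin.subset hSB
  -- eventual values of each ω τ n, n ∈ B
  have hev : ∀ n ∈ hBfin.toFinset, ∀ᶠ τ in nhdsWithin (0:ℝ) (Set.Ioi 0),
      ω τ n = (if ι n ∈ t • P then (1:ℝ) else 0) := by
    intro n _
    by_cases hn : ι n ∈ t • P
    · rw [if_pos hn]
      filter_upwards [self_mem_nhdsWithin] with τ hτ
      exact hone τ hτ n hn
    · rw [if_neg hn]
      set D := Metric.infDist (ι n) (t • P) with hDdef
      have hD : 0 < D := (htPclosed.notMem_iff_infDist_pos htPne).mp hn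
      have hpos : 0 < D / (2 * (M' + 1)) := by positivity
      filter_upwards [Ioo_mem_nhdsGT_of_mem (Set.mem_Ico.mpr ⟨le_refl 0, hpos⟩)] with τ hτ
      refine hzero n τ hτ.1 (D / 2) (by positivity) ?_
      have h1 : τ * M' ≤ τ * (M' + 1) := by nlinarith [hτ.1]
      have h2 : τ * (M' + 1) < D / 2 := by
        have := hτ.2
        have h3 : τ * (2 * (M' + 1)) < D := by
          rw [← lt_div_iff₀ (by positivity)]
          exact this
        nlinarith
      linarith
  -- assemble
  refine (Filter.tendsto_congr' ?_).mpr tendsto_const_nhds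
  filter_upwards [(Filter.eventually_all_finset _).mpr hev,
    Ioo_mem_nhdsGT_of_mem (Set.mem_Ico.mpr ⟨le_refl 0, one_pos⟩)] with τ hτall hτ1
  have hsupp : ∀ n ∉ hBfin.toFinset, ω τ n = 0 := by
    intro n hn
    rw [Set.Finite.mem_toFinset] at hn
    have hgt : M' + 1 < Metric.infDist (ι n) (t • P) := lt_of_not_ge hn
    refine hzero n τ hτ1.1 1 one_pos ?_
    have : τ * M' ≤ M' := by nlinarith [hτ1.1, hτ1.2]
    linarith
  rw [tsum_eq_sum hsupp, Finset.sum_congr rfl hτall]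
  have hfc : (hBfin.toFinset.filter (fun n => ι n ∈ t • P)) = hSfin.toFinset := by
    ext n
    simp only [Finset.mem_filter, Set.Finite.mem_toFinset]
    exact ⟨fun h => h.2, fun h => ⟨hSB h, h⟩⟩
  rw [Finset.sum_boole, hfc, Set.ncard_eq_toFinset_card _ hSfin]
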